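/- Let G be a torsion-free abelian group, let q ∈ ℕ and 0 < δ < 1/2, let n be sufficiently large in terms of δ and q, and let v₁,...,v_n ∈ G. Let ξ₁,...,ξ_n be i.i.d. Rademacher random variables. Assume the Nguyen–Vu optimal inverse theorem: for any C > 0, if ρ := sup_z Pr[ξ₁v₁ + ... + ξ_nv_n = z] > n^{−C}, then for any √n ≤ n' ≤ n there is a symmetric GAP of some rank r = O_C(1) and volume O_C(ρ^{−1}(n')^{−r/2}) containing all but at most n' of the v_i. Then sup_{z∈G} Pr[ξ₁v₁ + ... + ξ_nv_n = z] ≤ n^{−q/2 + qδ} + Σ_{r=0}^{q−1} n^{−r/2 + qδ} / h_r^δ(v), where h_r^δ(v) is the minimum volume of a symmetric GAP of rank at most r containing all but at most n^{1−δ} of v₁,...,v_n (and h_r^δ(v) = ∞ if no such GAP exists). -/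

import Mathlib

open scoped Classical

/-- The Rademacher sum `ξ₁v₁ + ... + ξ_nv_n`, where the sign `ξᵢ = ±1` is modelled by a
Boolean. -/
def radSum {G : Type*} [AddCommGroup G] {n : ℕ} (v : Fin n → G) (ξ : Fin n → Bool) : G :=
  ∑ i, (if ξ i then (1 : ℤ) else (-1 : ℤ)) • v i

/-- The probability of an event under `n` i.i.d. Rademacher random variables (uniform
counting measure on `{-1,1}^n`, modelled as `Fin n → Bool`). -/
noncomputable def radProb (n : ℕ) (P : (Fin n → Bool) → Prop) : ℝ :=
  (((Finset.univ : Finset (Fin n → Bool)).filter P).card : ℝ) / 2 ^ n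

/-- Membership of `g` in the image of the symmetric GAP
`(a₁,...,a_{r'}) ↦ a₁w₁ + ... + a_{r'}w_{r'}`, `|aᵢ| ≤ Nᵢ`. -/
def memGAP {G : Type*} [AddCommGroup G] {r' : ℕ} (N : Fin r' → ℕ) (w : Fin r' → G)
    (g : G) : Prop :=
  ∃ a : Fin r' → ℤ, (∀ t, |a t| ≤ (N t : ℤ)) ∧ g = ∑ t, a t • w t

/-- `h_r^δ(v)`: the minimum volume of a symmetric GAP of rank at most `r` containing all
but at most `n^{1-δ}` of `v₁,...,v_n`. (If no such GAP exists the set below is empty and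
`Real.sInf` gives the junk value `0`; correspondingly, division by it below yields `0`,
matching the convention `h_r^δ(v) = ∞`, `x/∞ = 0`.) -/
noncomputable def hVol (n : ℕ) (δ : ℝ) {G : Type*} [AddCommGroup G] (v : Fin n → G)
    (r : ℕ) : ℝ :=
  sInf {V : ℝ | ∃ r' : ℕ, r' ≤ r ∧ ∃ (N : Fin r' → ℕ) (w : Fin r' → G),
    V = ∏ t, (2 * (N t : ℝ) + 1) ∧
    (((Finset.univ : Finset (Fin n)).filter (fun i => ¬ memGAP N w (v i))).card : ℝ)
      ≤ (n : ℝ) ^ (1 - δ)}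

lemma radProb_nonneg' (n : ℕ) (P : (Fin n → Bool) → Prop) : 0 ≤ radProb n P := by
  unfold radProb; positivity

lemma radProb_le_one' (n : ℕ) (P : (Fin n → Bool) → Prop) : radProb n P ≤ 1 := by
  unfold radProb
  rw [div_le_one (by positivity)]
  calc (((Finset.univ : Finset (Fin n → Bool)).filter P).card : ℝ)
      ≤ ((Finset.univ : Finset (Fin n → Bool)).card : ℝ) := by
        exact_mod_cast Finset.card_filter_le _ _
    _ = 2 ^ n := by simp [Finset.card_univ]

lemma one_le_vol {r' : ℕ} (N : Fin r' → ℕ) : (1:ℝ) ≤ ∏ t, (2 * (N t : ℝ) + 1) := by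
  have h := Finset.prod_le_prod (f := fun _ : Fin r' => (1:ℝ))
    (g := fun t => 2 * (N t : ℝ) + 1) (s := Finset.univ)
    (fun t _ => zero_le_one)
    (fun t _ => by have : (0:ℝ) ≤ (N t : ℝ) := Nat.cast_nonneg _; linarith)
  simpa using h

lemma hVol_nonneg' (n : ℕ) (δ : ℝ) {G : Type*} [AddCommGroup G] (v : Fin n → G)
    (r : ℕ) : 0 ≤ hVol n δ v r := by
  unfold hVol
  rcases Set.eq_empty_or_nonempty {V : ℝ | ∃ r' : ℕ, r' ≤ r ∧ ∃ (N : Fin r' → ℕ) (w : Fin r' → G),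
    V = ∏ t, (2 * (N t : ℝ) + 1) ∧
    (((Finset.univ : Finset (Fin n)).filter (fun i => ¬ memGAP N w (v i))).card : ℝ)
      ≤ (n : ℝ) ^ (1 - δ)} with h | h
  · rw [h, Real.sInf_empty]
  · apply Real.sInf_nonneg
    rintro V ⟨r', -, N, w, rfl, -⟩
    positivity

set_option maxHeartbeats 1600000 in
/-- Let `G` be a torsion-free abelian group, `q ∈ ℕ`, `0 < δ < 1/2`, `n`
sufficiently large in terms of `δ` and `q` (and the constants `rB`, `K` of the assumed
inverse theorem), and `v₁,...,v_n ∈ G`. Assume the Nguyen–Vu optimal inverse theorem: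
for any `C > 0`, if `ρ := sup_z Pr[ξ₁v₁ + ... + ξ_nv_n = z] > n^{-C}`, then for any
`√n ≤ n' ≤ n` there is a symmetric GAP of some rank `r' ≤ rB C` and volume at most
`K C · ρ⁻¹ · (n')^{-r'/2}` containing all but at most `n'` of the `vᵢ`. Then
`sup_z Pr[ξ₁v₁ + ... + ξ_nv_n = z] ≤ n^{-q/2+qδ} + ∑_{r=0}^{q-1} n^{-r/2+qδ} / h_r^δ(v)`. -/
theorem stmt17 (q : ℕ) (δ : ℝ) (hδ0 : 0 < δ) (hδ2 : δ < 1 / 2)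
    (rB : ℝ → ℕ) (K : ℝ → ℝ) :
    ∃ N₀ : ℕ, ∀ n : ℕ, N₀ ≤ n →
    ∀ (G : Type) [instG : AddCommGroup G],
    (∀ (g : G) (m : ℕ), 0 < m → m • g = 0 → g = 0) →
    ∀ v : Fin n → G,
    (∀ C : ℝ, 0 < C →
      ∀ ρ : ℝ, ρ = (⨆ z : G, radProb n (fun ξ => radSum v ξ = z)) →
      (n : ℝ) ^ (-C) < ρ →
      ∀ n' : ℝ, Real.sqrt n ≤ n' → n' ≤ n →
      ∃ r' : ℕ, r' ≤ rB C ∧ ∃ (N : Fin r' → ℕ) (w : Fin r' → G),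
        (∏ t, (2 * (N t : ℝ) + 1)) ≤ K C * ρ⁻¹ * n' ^ (-(r' : ℝ) / 2) ∧
        (((Finset.univ : Finset (Fin n)).filter (fun i => ¬ memGAP N w (v i))).card : ℝ)
          ≤ n') →
    ∀ z : G, radProb n (fun ξ => radSum v ξ = z) ≤
      (n : ℝ) ^ (-(q : ℝ) / 2 + q * δ) +
        ∑ r ∈ Finset.range q, (n : ℝ) ^ (-(r : ℝ) / 2 + q * δ) / hVol n δ v r := by
  classical
  rcases Nat.eq_zero_or_pos q with hq | hq
  · refine ⟨1, fun n hn G instG _ v _ z => ?_⟩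
    subst hq
    have h1 : (-(0:ℕ) : ℝ) / 2 + (0:ℕ) * δ = 0 := by norm_num
    simp only [Finset.range_zero, Finset.sum_empty, add_zero, h1, Real.rpow_zero]
    exact radProb_le_one' _ _
  -- q ≥ 1
  set C : ℝ := (q : ℝ) / 2 - q * δ with hCdef
  have hq1 : (1 : ℝ) ≤ (q : ℝ) := by exact_mod_cast hq
  have hqpos : (0:ℝ) < (q:ℝ) := lt_of_lt_of_le one_pos hq1
  have hC : 0 < C := by
    have h2 : C = (q:ℝ) * (1/2 - δ) := by rw [hCdef]; ring
    rw [h2]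
    exact mul_pos hqpos (by linarith)
  set e : ℝ := (q : ℝ) * δ / 2 with hedef
  have he : 0 < e := by positivity
  have hmax0 : (0:ℝ) ≤ max 1 (K C) := le_trans zero_le_one (le_max_left _ _)
  obtain ⟨M, hM⟩ := exists_nat_ge ((max 1 (K C)) ^ (1 / e : ℝ))
  refine ⟨max M 1, fun n hn G instG _ v hinv z => ?_⟩
  have hn1n : 1 ≤ n := le_trans (le_max_right M 1) hn
  have hn1 : (1 : ℝ) ≤ (n : ℝ) := by exact_mod_cast hn1n
  have hn0 : (0 : ℝ) < (n : ℝ) := lt_of_lt_of_le one_pos hn1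
  have hnB : (max 1 (K C)) ^ (1 / e : ℝ) ≤ (n : ℝ) :=
    le_trans hM (by exact_mod_cast le_trans (le_max_left M 1) hn)
  -- K C ≤ n ^ e
  have hKe : K C ≤ (n : ℝ) ^ e := by
    have h1 : ((max 1 (K C)) ^ (1 / e : ℝ)) ^ e = max 1 (K C) := by
      rw [← Real.rpow_mul hmax0, one_div_mul_cancel he.ne', Real.rpow_one]
    calc K C ≤ max 1 (K C) := le_max_right _ _
      _ = ((max 1 (K C)) ^ (1 / e : ℝ)) ^ e := h1.symm
      _ ≤ (n : ℝ) ^ e := Real.rpow_le_rpow (Real.rpow_nonneg hmax0 _) hnB he.le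
  have hsum_nonneg : 0 ≤ ∑ r ∈ Finset.range q,
      (n : ℝ) ^ (-(r : ℝ) / 2 + q * δ) / hVol n δ v r := by
    refine Finset.sum_nonneg fun r _ => div_nonneg (Real.rpow_nonneg hn0.le _)
      (hVol_nonneg' n δ v r)
  set ρ : ℝ := ⨆ z : G, radProb n (fun ξ => radSum v ξ = z) with hρdef
  have hbdd : BddAbove (Set.range fun z : G => radProb n (fun ξ => radSum v ξ = z)) :=
    ⟨1, by rintro x ⟨z, rfl⟩; exact radProb_le_one' _ _⟩
  have hPz : radProb n (fun ξ => radSum v ξ = z) ≤ ρ := le_ciSup hbdd z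
  by_cases hρn : (n : ℝ) ^ (-C) < ρ
  · -- apply the inverse theorem with n' = n^(1-δ)
    have hρpos : 0 < ρ := lt_of_le_of_lt (Real.rpow_nonneg hn0.le _) hρn
    have hsqrt : Real.sqrt n ≤ (n : ℝ) ^ (1 - δ) := by
      rw [Real.sqrt_eq_rpow]
      exact Real.rpow_le_rpow_of_exponent_le hn1 (by linarith)
    have hle : (n : ℝ) ^ (1 - δ) ≤ (n : ℝ) := by
      nth_rewrite 2 [← Real.rpow_one (n : ℝ)]
      exact Real.rpow_le_rpow_of_exponent_le hn1 (by linarith)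
    obtain ⟨r', hr'B, N, w, hVle, hcard⟩ := hinv C hC ρ hρdef hρn ((n : ℝ) ^ (1 - δ)) hsqrt hle
    set V : ℝ := ∏ t, (2 * (N t : ℝ) + 1) with hVdef
    have hV1 : (1 : ℝ) ≤ V := by rw [hVdef]; exact one_le_vol N
    set X : ℝ := ((n : ℝ) ^ (1 - δ)) ^ (-(r' : ℝ) / 2) with hXdef
    have hXpos : 0 < X := Real.rpow_pos_of_pos (Real.rpow_pos_of_pos hn0 _) _
    have hXeq : X = (n : ℝ) ^ ((1 - δ) * (-(r' : ℝ) / 2)) := by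
      rw [hXdef, Real.rpow_mul hn0.le]
    have hρV : ρ * V ≤ K C * X := by
      calc ρ * V ≤ ρ * (K C * ρ⁻¹ * X) := by
            exact mul_le_mul_of_nonneg_left hVle hρpos.le
        _ = K C * X := by field_simp
    by_cases hr'q : r' < q
    · -- the GAP has rank < q : use the sum term r'
      have hrq : (r' : ℝ) ≤ (q : ℝ) := by exact_mod_cast hr'q.le
      set h : ℝ := hVol n δ v r' with hhdef
      have hmem : V ∈ {V : ℝ | ∃ r'' : ℕ, r'' ≤ r' ∧ ∃ (N : Fin r'' → ℕ) (w : Fin r'' → G),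
          V = ∏ t, (2 * (N t : ℝ) + 1) ∧
          (((Finset.univ : Finset (Fin n)).filter (fun i => ¬ memGAP N w (v i))).card : ℝ)
            ≤ (n : ℝ) ^ (1 - δ)} := ⟨r', le_refl _, N, w, rfl, hcard⟩
      have hbdd' : BddBelow {V : ℝ | ∃ r'' : ℕ, r'' ≤ r' ∧ ∃ (N : Fin r'' → ℕ) (w : Fin r'' → G),
          V = ∏ t, (2 * (N t : ℝ) + 1) ∧
          (((Finset.univ : Finset (Fin n)).filter (fun i => ¬ memGAP N w (v i))).card : ℝ)
            ≤ (n : ℝ) ^ (1 - δ)} := by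
        refine ⟨1, ?_⟩
        rintro x ⟨r'', -, N', w', rfl, -⟩
        exact one_le_vol N'
      have hhV : h ≤ V := csInf_le hbdd' hmem
      have hh1 : (1 : ℝ) ≤ h := by
        refine le_csInf ⟨V, hmem⟩ ?_
        rintro x ⟨r'', -, N', w', rfl, -⟩
        exact one_le_vol N'
      have hhpos : 0 < h := lt_of_lt_of_le one_pos hh1
      have hρh : ρ * h ≤ K C * X :=
        le_trans (mul_le_mul_of_nonneg_left hhV hρpos.le) hρV
      have hρle : ρ ≤ K C * X / h := (le_div_iff₀ hhpos).mpr hρh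
      have hKX : K C * X ≤ (n : ℝ) ^ (-(r' : ℝ) / 2 + q * δ) := by
        calc K C * X ≤ (n : ℝ) ^ e * X := mul_le_mul_of_nonneg_right hKe hXpos.le
          _ = (n : ℝ) ^ (e + (1 - δ) * (-(r' : ℝ) / 2)) := by
              rw [hXeq, ← Real.rpow_add hn0]
          _ ≤ (n : ℝ) ^ (-(r' : ℝ) / 2 + q * δ) := by
              apply Real.rpow_le_rpow_of_exponent_le hn1
              rw [hedef]
              nlinarith [mul_le_mul_of_nonneg_left hrq hδ0.le]
      have hterm : ρ ≤ (n : ℝ) ^ (-(r' : ℝ) / 2 + q * δ) / h := by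
        calc ρ ≤ K C * X / h := hρle
          _ ≤ (n : ℝ) ^ (-(r' : ℝ) / 2 + q * δ) / h := by gcongr
      have hsum : (n : ℝ) ^ (-(r' : ℝ) / 2 + q * δ) / h ≤
          ∑ r ∈ Finset.range q, (n : ℝ) ^ (-(r : ℝ) / 2 + q * δ) / hVol n δ v r := by
        refine Finset.single_le_sum (f := fun r : ℕ =>
          (n : ℝ) ^ (-(r : ℝ) / 2 + q * δ) / hVol n δ v r) ?_ (Finset.mem_range.mpr hr'q)
        exact fun r _ => div_nonneg (Real.rpow_nonneg hn0.le _) (hVol_nonneg' n δ v r)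
      have : 0 ≤ (n : ℝ) ^ (-(q : ℝ) / 2 + q * δ) := Real.rpow_nonneg hn0.le _
      linarith [hPz, hterm.trans hsum]
    · -- the GAP has rank ≥ q : ρ is tiny
      push_neg at hr'q
      have hrq : (q : ℝ) ≤ (r' : ℝ) := by exact_mod_cast hr'q
      have hρle : ρ ≤ K C * X := by
        calc ρ = ρ * 1 := (mul_one ρ).symm
          _ ≤ ρ * V := mul_le_mul_of_nonneg_left hV1 hρpos.le
          _ ≤ K C * X := hρV
      have hKX : K C * X ≤ (n : ℝ) ^ (-(q : ℝ) / 2 + q * δ) := by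
        calc K C * X ≤ (n : ℝ) ^ e * X := mul_le_mul_of_nonneg_right hKe hXpos.le
          _ = (n : ℝ) ^ (e + (1 - δ) * (-(r' : ℝ) / 2)) := by
              rw [hXeq, ← Real.rpow_add hn0]
          _ ≤ (n : ℝ) ^ (-(q : ℝ) / 2 + q * δ) := by
              apply Real.rpow_le_rpow_of_exponent_le hn1
              rw [hedef]
              nlinarith [mul_le_mul_of_nonneg_left hrq (by linarith : (0:ℝ) ≤ 1 - δ)]
      linarith [hPz, hρle.trans hKX]
  · -- ρ ≤ n^(-C)
    push_neg at hρn
    have hCeq : -C = -(q : ℝ) / 2 + q * δ := by rw [hCdef]; ring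
    rw [hCeq] at hρn
    linarith [hPz, hsum_nonneg]
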